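/- Let $n,k\in\mathbb{N}$ with $k=pn\le n$. Then $\mathbb{P}(\mathrm{Bin}(n,p)\ge k)\ge 1/4$. Consequently, for any family $\mathcal{A}\subset\binom{[n]}{k}$ with uniform density $\mu(\mathcal{A})=|\mathcal{A}|/\binom{n}{k}$, the up-closure $\mathcal{A}^\uparrow=\{B\subset[n]:A\subset B\text{ for some }A\in\mathcal{A}\}$ satisfies $\mu_p(\mathcal{A}^\uparrow)\ge\mu(\mathcal{A})/4$. -/

import Mathlib

open Finset Polynomial
open scoped FinsetFamily

lemma bern_sum (n : ℕ) (p : ℝ) :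
    ∑ ν ∈ Finset.range (n+1), (n.choose ν : ℝ) * p ^ ν * (1-p) ^ (n-ν) = 1 := by
  have := congrArg (Polynomial.eval p) (bernsteinPolynomial.sum ℝ n)
  simpa [bernsteinPolynomial, Polynomial.eval_finset_sum] using this

lemma bern_var (n : ℕ) (p : ℝ) :
    ∑ ν ∈ Finset.range (n+1), ((n:ℝ)*p - ν)^2 * ((n.choose ν : ℝ) * p ^ ν * (1-p) ^ (n-ν))
      = n * p * (1-p) := by
  have := congrArg (Polynomial.eval p) (bernsteinPolynomial.variance ℝ n)
  simpa [bernsteinPolynomial, Polynomial.eval_finset_sum, nsmul_eq_mul] using this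

lemma pair_step (K A i : ℕ) (h2 : (i+1)*(i+1) ≤ 2*(A+i+1)+1) :
    (A+i+1)^2 * ((K+1) * (K+2*i+3)) ≤ (K+i+2)^2 * ((A+1) * (A+2*i+3)) := by
  nlinarith [sq_nonneg (A+i+1), sq_nonneg (K+i+2), Nat.zero_le A, Nat.zero_le K,
    Nat.mul_le_mul_right ((K+i+2)^2) h2]

lemma main_nat (k a : ℕ) :
    ∀ i, i*i ≤ 2*a+1 → i+1 ≤ k → i ≤ a →
      Nat.choose (k+a) (k-1-i) * a^(2*i+1) ≤ Nat.choose (k+a) (k+i) * k^(2*i+1) := by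
  intro i
  induction i with
  | zero =>
    intro _ hk _
    obtain ⟨K, rfl⟩ : ∃ K, k = K + 1 := ⟨k-1, by omega⟩
    norm_num
    have h := Nat.choose_succ_right_eq (K+1+a) K
    have hr : K+1+a-K = a+1 := by omega
    rw [hr] at h
    rw [h]
    exact Nat.mul_le_mul_left _ (by omega)
  | succ i ih =>
    intro h2 hk ha
    obtain ⟨K, rfl⟩ : ∃ K, k = K + i + 2 := ⟨k-i-2, by omega⟩
    obtain ⟨A, rfl⟩ : ∃ A, a = A + i + 1 := ⟨a-i-1, by omega⟩
    have IH := ih (by nlinarith) (by omega) (by omega)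
    set n := K+i+2+(A+i+1) with hn
    have e1 : K+i+2-1-i = K+1 := by omega
    have e2 : K+i+2-1-(i+1) = K := by omega
    rw [e1] at IH
    rw [e2]
    have h1 : Nat.choose n (K+2*i+3) * (K+2*i+3) = Nat.choose n (K+2*i+2) * (A+1) := by
      have := Nat.choose_succ_right_eq n (K+2*i+2)
      have hx : n - (K+2*i+2) = A+1 := by omega
      rw [hx] at this
      simpa [show K+2*i+2+1 = K+2*i+3 by omega] using this
    have h2' : Nat.choose n (K+1) * (K+1) = Nat.choose n K * (A+2*i+3) := by
      have := Nat.choose_succ_right_eq n K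
      have hx : n - K = A+2*i+3 := by omega
      rw [hx] at this
      exact this
    have ei : K+i+2+(i+1) = K+2*i+3 := by omega
    have ei2 : K+i+2+i = K+2*i+2 := by omega
    rw [ei]
    rw [ei2] at IH
    have key : (Nat.choose n K * (A+i+1)^(2*(i+1)+1)) * ((K+2*i+3) * (A+2*i+3))
        ≤ (Nat.choose n (K+2*i+3) * (K+i+2)^(2*(i+1)+1)) * ((K+2*i+3) * (A+2*i+3)) := by
      calc (Nat.choose n K * (A+i+1)^(2*(i+1)+1)) * ((K+2*i+3) * (A+2*i+3))
          = (Nat.choose n K * (A+2*i+3)) * ((A+i+1)^(2*(i+1)+1) * (K+2*i+3)) := by ring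
        _ = (Nat.choose n (K+1) * (K+1)) * ((A+i+1)^(2*(i+1)+1) * (K+2*i+3)) := by rw [h2']
        _ = (Nat.choose n (K+1) * (A+i+1)^(2*i+1)) * ((A+i+1)^2 * ((K+1) * (K+2*i+3))) := by ring
        _ ≤ (Nat.choose n (K+2*i+2) * (K+i+2)^(2*i+1)) * ((K+i+2)^2 * ((A+1) * (A+2*i+3))) := by
            exact Nat.mul_le_mul IH (pair_step K A i (by omega))
        _ = (Nat.choose n (K+2*i+2) * (A+1)) * ((K+i+2)^(2*(i+1)+1) * (A+2*i+3)) := by ring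
        _ = (Nat.choose n (K+2*i+3) * (K+2*i+3)) * ((K+i+2)^(2*(i+1)+1) * (A+2*i+3)) := by rw [h1]
        _ = (Nat.choose n (K+2*i+3) * (K+i+2)^(2*(i+1)+1)) * ((K+2*i+3) * (A+2*i+3)) := by ring
    exact Nat.le_of_mul_le_mul_right key (by positivity)
set_option maxHeartbeats 1600000 in
lemma part1 {n k : ℕ} (p : ℝ) (hp0 : 0 ≤ p) (hp1 : p ≤ 1)
    (hk : (k : ℝ) = p * n) (hkn : k ≤ n) :
    (1 / 4 : ℝ) ≤ ∑ j ∈ Finset.Icc k n, (n.choose j : ℝ) * p ^ j * (1 - p) ^ (n - j) := by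
  set b : ℕ → ℝ := fun j => (n.choose j : ℝ) * p ^ j * (1 - p) ^ (n - j) with hbdef
  have hb0 : ∀ j, 0 ≤ b j := by
    intro j
    have : (0:ℝ) ≤ 1 - p := by linarith
    positivity
  rcases Nat.eq_zero_or_pos k with hk0 | hk1
  · subst hk0
    have : Finset.Icc 0 n = Finset.range (n+1) := by
      rw [Finset.range_eq_Ico, Finset.Ico_add_one_right_eq_Icc]
    rw [this, bern_sum]
    norm_num
  rcases eq_or_lt_of_le hkn with hka | hka
  · -- k = n, p = 1
    subst hka
    have hn0 : (0:ℝ) < (k:ℝ) := by exact_mod_cast hk1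
    have hp : p = 1 := by
      have : (k:ℝ) = p * k := hk
      nlinarith
    rw [Finset.Icc_self, Finset.sum_singleton]
    simp only [hbdef, hp]
    norm_num
  -- main case : 1 ≤ k < n
  have hn1 : 0 < n := lt_of_le_of_lt (Nat.zero_le k) hka
  obtain ⟨a, hna⟩ : ∃ a, n = k + a := ⟨n - k, by omega⟩
  have ha1 : 1 ≤ a := by omega
  have hnR : (0:ℝ) < (n:ℝ) := by exact_mod_cast hn1
  have hp' : p = (k:ℝ) / n := by field_simp [hk]; exact hk.symm
  have hq' : 1 - p = (a:ℝ) / n := by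
    rw [hp']
    have : (a:ℝ) = (n:ℝ) - k := by
      have : (k:ℝ) + a = n := by exact_mod_cast congrArg (Nat.cast : ℕ → ℝ) hna.symm
      linarith
    rw [this]
    field_simp
  -- cast formula for b
  have hb_cast : ∀ j, j ≤ n → b j = ((n.choose j * k^j * a^(n-j) : ℕ) : ℝ) / (n:ℝ)^n := by
    intro j hj
    have hsum : j + (n - j) = n := by omega
    simp only [hbdef]
    rw [hq', hp']
    have hnn : (n:ℝ)^n = (n:ℝ)^j * (n:ℝ)^(n-j) := by rw [← pow_add, hsum]
    rw [eq_div_iff (by positivity), hnn]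
    push_cast
    rw [div_pow, div_pow]
    field_simp
  obtain ⟨m, hmdef⟩ : ∃ m, m = Nat.sqrt (2*a+1) := ⟨_, rfl⟩
  have hmm : m*m ≤ 2*a+1 := by
    rw [hmdef]; have := Nat.sqrt_le' (2*a+1); rwa [pow_two] at this
  have hms : 2*a+1 < (m+1)*(m+1) := by
    rw [hmdef]; have := Nat.lt_succ_sqrt' (2*a+1); rwa [pow_two] at this
  have hma : m ≤ a := by
    have : Nat.sqrt (2*a+1) < a+1 := Nat.sqrt_lt'.mpr (by nlinarith)
    omega
  obtain ⟨c, hcdef⟩ : ∃ c, c = k - (m+1) := ⟨_, rfl⟩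
  -- pairing
  have pair : ∀ j ∈ Finset.Ico c k, b j ≤ b (k + (k-1-j)) := by
    intro j hj
    rw [Finset.mem_Ico] at hj
    set i := k - 1 - j with hidef
    have hik : i + 1 ≤ k := by omega
    have him : i ≤ m := by omega
    have hia : i ≤ a := le_trans him hma
    have hii : i*i ≤ 2*a+1 := le_trans (Nat.mul_le_mul him him) hmm
    have hj_eq : j = k - 1 - i := by omega
    have hkin : k + i ≤ n := by omega
    have hjn : j ≤ n := by omega
    have nat_ineq : n.choose j * k^j * a^(n-j) ≤ n.choose (k+i) * k^(k+i) * a^(n-(k+i)) := by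
      have base := main_nat k a i hii hik hia
      rw [← hna] at base
      have h1 : a^(n-j) = a^(2*i+1) * a^(n-(k+i)) := by
        rw [← pow_add]; congr 1; omega
      have h2 : k^(k+i) = k^(2*i+1) * k^j := by
        rw [← pow_add]; congr 1; omega
      calc n.choose j * k^j * a^(n-j)
          = (n.choose j * a^(2*i+1)) * (k^j * a^(n-(k+i))) := by rw [h1]; ring
        _ = (n.choose (k-1-i) * a^(2*i+1)) * (k^j * a^(n-(k+i))) := by rw [← hj_eq]
        _ ≤ (n.choose (k+i) * k^(2*i+1)) * (k^j * a^(n-(k+i))) := by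
            exact Nat.mul_le_mul_right _ base
        _ = n.choose (k+i) * k^(k+i) * a^(n-(k+i)) := by rw [h2]; ring
    have hji : k + (k-1-j) = k + i := by omega
    rw [hji, hb_cast j hjn, hb_cast (k+i) hkin]
    have cast_ineq : ((n.choose j * k^j * a^(n-j) : ℕ) : ℝ)
        ≤ ((n.choose (k+i) * k^(k+i) * a^(n-(k+i)) : ℕ) : ℝ) := by exact_mod_cast nat_ineq
    gcongr
  -- sum splitting
  have h1 : (∑ j ∈ Finset.Ico 0 c, b j) + (∑ j ∈ Finset.Ico c k, b j)
      = ∑ j ∈ Finset.Ico 0 k, b j :=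
    Finset.sum_Ico_consecutive b (Nat.zero_le c) (by omega)
  have h2 : (∑ j ∈ Finset.Ico 0 k, b j) + (∑ j ∈ Finset.Ico k (n+1), b j)
      = ∑ j ∈ Finset.Ico 0 (n+1), b j :=
    Finset.sum_Ico_consecutive b (Nat.zero_le k) (by omega)
  have htot : ∑ j ∈ Finset.Ico 0 (n+1), b j = 1 := by
    rw [← Finset.range_eq_Ico]
    exact bern_sum n p
  -- M ≤ S
  have hMS : (∑ j ∈ Finset.Ico c k, b j) ≤ ∑ j ∈ Finset.Ico k (n+1), b j := by
    have hinj : ∀ x ∈ Finset.Ico c k, ∀ y ∈ Finset.Ico c k,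
        k + (k-1-x) = k + (k-1-y) → x = y := by
      intro x hx y hy hxy
      rw [Finset.mem_Ico] at hx hy
      omega
    calc ∑ j ∈ Finset.Ico c k, b j ≤ ∑ j ∈ Finset.Ico c k, b (k + (k-1-j)) :=
          Finset.sum_le_sum pair
      _ = ∑ j' ∈ (Finset.Ico c k).image (fun j => k + (k-1-j)), b j' :=
          (Finset.sum_image hinj).symm
      _ ≤ ∑ j ∈ Finset.Ico k (n+1), b j := by
          apply Finset.sum_le_sum_of_subset_of_nonneg
          · intro x hx
            simp only [Finset.mem_image, Finset.mem_Ico] at hx ⊢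
            obtain ⟨j, hj, rfl⟩ := hx
            have : k-1-j ≤ m := by omega
            omega
          · intro j _ _
            exact hb0 j
  -- Chebyshev bound on left tail
  have hvar : ∑ j ∈ Finset.range c, ((k:ℝ) - j)^2 * b j ≤ (a:ℝ) := by
    have hext : ∑ j ∈ Finset.range c, ((k:ℝ) - j)^2 * b j
        ≤ ∑ j ∈ Finset.range (n+1), ((k:ℝ) - j)^2 * b j := by
      apply Finset.sum_le_sum_of_subset_of_nonneg
      · exact Finset.range_subset_range.2 (by omega)
      · intro j _ _
        exact mul_nonneg (sq_nonneg _) (hb0 j)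
    have heq : ∑ j ∈ Finset.range (n+1), ((k:ℝ) - j)^2 * b j = (n:ℝ) * p * (1-p) := by
      rw [← bern_var n p]
      apply Finset.sum_congr rfl
      intro j _
      rw [hbdef, hk]
      ring
    have hcast : (k:ℝ) ≤ (n:ℝ) := by exact_mod_cast hkn
    have haR : (0:ℝ) ≤ (a:ℝ) := by positivity
    have hval : (n:ℝ) * p * (1-p) = (k:ℝ) * a / n := by
      have hnp : (n:ℝ) * p = (k:ℝ) := by rw [hk]; ring
      rw [hnp, hq']
      ring
    have hle : (k:ℝ) * a / n ≤ (a:ℝ) := by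
      rw [div_le_iff₀ hnR]
      nlinarith
    calc ∑ j ∈ Finset.range c, ((k:ℝ) - j)^2 * b j
        ≤ ∑ j ∈ Finset.range (n+1), ((k:ℝ) - j)^2 * b j := hext
      _ = (n:ℝ) * p * (1-p) := heq
      _ = (k:ℝ) * a / n := hval
      _ ≤ (a:ℝ) := hle
  have hS0 : 0 ≤ ∑ j ∈ Finset.range c, b j := Finset.sum_nonneg (fun j _ => hb0 j)
  have hT : (∑ j ∈ Finset.range c, b j) ≤ 1/2 := by
    have hterm : ∀ j ∈ Finset.range c, ((m:ℝ)+2)^2 * b j ≤ ((k:ℝ) - j)^2 * b j := by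
      intro j hj
      rw [Finset.mem_range] at hj
      have hjk : j + (m+2) ≤ k := by omega
      have hjkR : (j:ℝ) + ((m:ℝ)+2) ≤ (k:ℝ) := by exact_mod_cast hjk
      have h3 : ((m:ℝ)+2)^2 ≤ ((k:ℝ)-j)^2 := by nlinarith [Nat.cast_nonneg (α := ℝ) j]
      exact mul_le_mul_of_nonneg_right h3 (hb0 j)
    have hsum2 : ((m:ℝ)+2)^2 * (∑ j ∈ Finset.range c, b j) ≤ (a:ℝ) := by
      rw [Finset.mul_sum]
      exact le_trans (Finset.sum_le_sum hterm) hvar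
    have hma2 : 2*(a:ℝ) ≤ ((m:ℝ)+2)^2 := by
      have hmono : (m+1)*(m+1) ≤ (m+2)*(m+2) := Nat.mul_le_mul (by omega) (by omega)
      have h4 : 2*a ≤ (m+2)*(m+2) := by linarith
      have h5 : (2*(a:ℝ)) ≤ ((m:ℝ)+2)*((m:ℝ)+2) := by exact_mod_cast h4
      rw [pow_two]; exact h5
    have hm2pos : (0:ℝ) < ((m:ℝ)+2)^2 := by positivity
    nlinarith [hsum2, hma2, hm2pos]
  -- finish
  rw [show Finset.Icc k n = Finset.Ico k (n+1) from (Finset.Ico_add_one_right_eq_Icc k n).symm]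
  have hrc : ∑ j ∈ Finset.range c, b j = ∑ j ∈ Finset.Ico 0 c, b j := by
    rw [Finset.range_eq_Ico]
  rw [hrc] at hT hS0
  linarith
lemma local_lym_up {α : Type*} [DecidableEq α] [Fintype α] {𝒜 : Finset (Finset α)} {r : ℕ}
    (hr : r < Fintype.card α) (h : (𝒜 : Set (Finset α)).Sized r) :
    (𝒜.card : ℝ) / (Fintype.card α).choose r ≤ ((∂⁺ 𝒜).card : ℝ) / (Fintype.card α).choose (r+1) := by
  set N := Fintype.card α with hN
  have hsized : ((𝒜ᶜˢ : Finset (Finset α)) : Set (Finset α)).Sized (N - r) := by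
    intro s hs
    rw [mem_coe, mem_compls] at hs
    have h1 : sᶜ.card = r := h hs
    have h2 : sᶜ.card = N - s.card := Finset.card_compl s
    have h3 : s.card ≤ N := Finset.card_le_univ s
    omega
  have hd := Finset.card_div_choose_le_card_shadow_div_choose (𝕜 := ℝ) (r := N - r)
    (by omega) hsized
  rw [Finset.shadow_compls, Finset.card_compls, Finset.card_compls] at hd
  have e1 : N.choose (N - r) = N.choose r := Nat.choose_symm (by omega)
  have e2 : N.choose (N - r - 1) = N.choose (r+1) := by
    rw [show N - r - 1 = N - (r+1) by omega]
    exact Nat.choose_symm (by omega)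
  rwa [e1, e2] at hd

lemma lym_up {n k : ℕ} (𝒜 : Finset (Finset (Fin n))) (h𝒜 : ∀ A ∈ 𝒜, A.card = k) :
    ∀ j, k ≤ j → j ≤ n →
      (𝒜.card : ℝ) / (n.choose k) ≤
        (((Finset.univ.filter (fun B : Finset (Fin n) => (∃ A ∈ 𝒜, A ⊆ B) ∧ B.card = j)).card : ℝ))
          / (n.choose j) := by
  intro j hkj
  induction j, hkj using Nat.le_induction with
  | base =>
    intro hkn
    have hsub : 𝒜 ⊆ Finset.univ.filter
        (fun B : Finset (Fin n) => (∃ A ∈ 𝒜, A ⊆ B) ∧ B.card = k) := by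
      intro A hA
      rw [Finset.mem_filter]
      exact ⟨Finset.mem_univ _, ⟨A, hA, subset_rfl⟩, h𝒜 A hA⟩
    have hc : (𝒜.card : ℝ) ≤ ((Finset.univ.filter
        (fun B : Finset (Fin n) => (∃ A ∈ 𝒜, A ⊆ B) ∧ B.card = k)).card : ℝ) := by
      exact_mod_cast Finset.card_le_card hsub
    gcongr
  | succ j hkj ih =>
    intro hj1n
    have hjn : j ≤ n := by omega
    have IH := ih hjn
    set F := Finset.univ.filter
      (fun B : Finset (Fin n) => (∃ A ∈ 𝒜, A ⊆ B) ∧ B.card = j) with hF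
    have hsizedF : (F : Set (Finset (Fin n))).Sized j := by
      intro B hB
      rw [Finset.mem_coe, hF, Finset.mem_filter] at hB
      exact hB.2.2
    have hshadow : ∂⁺ F ⊆ Finset.univ.filter
        (fun B : Finset (Fin n) => (∃ A ∈ 𝒜, A ⊆ B) ∧ B.card = j+1) := by
      intro B hB
      rw [Finset.mem_upShadow_iff] at hB
      obtain ⟨C, hC, x, hx, rfl⟩ := hB
      rw [hF, Finset.mem_filter] at hC
      obtain ⟨-, ⟨A, hA, hAC⟩, hCcard⟩ := hC
      rw [Finset.mem_filter]
      exact ⟨Finset.mem_univ _, ⟨A, hA, hAC.trans (Finset.subset_insert _ _)⟩,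
        by rw [Finset.card_insert_of_notMem hx, hCcard]⟩
    have hlym := local_lym_up (α := Fin n) (𝒜 := F) (r := j)
      (by rw [Fintype.card_fin]; omega) hsizedF
    rw [Fintype.card_fin] at hlym
    refine le_trans IH (le_trans hlym ?_)
    have hc : ((∂⁺ F).card : ℝ) ≤ ((Finset.univ.filter
        (fun B : Finset (Fin n) => (∃ A ∈ 𝒜, A ⊆ B) ∧ B.card = j+1)).card : ℝ) := by
      exact_mod_cast Finset.card_le_card hshadow
    gcongr
theorem stmt15 {n k : ℕ} (p : ℝ) (hp0 : 0 ≤ p) (hp1 : p ≤ 1)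
    (hk : (k : ℝ) = p * n) (hkn : k ≤ n)
    (𝒜 : Finset (Finset (Fin n))) (h𝒜 : ∀ A ∈ 𝒜, A.card = k) :
    (1 / 4 : ℝ) ≤ ∑ j ∈ Finset.Icc k n, (n.choose j : ℝ) * p ^ j * (1 - p) ^ (n - j) ∧
    ((𝒜.card : ℝ) / (n.choose k)) / 4 ≤
      ∑ B ∈ Finset.univ.filter (fun B : Finset (Fin n) => ∃ A ∈ 𝒜, A ⊆ B),
        p ^ B.card * (1 - p) ^ (n - B.card) := by
  have hq0 : (0:ℝ) ≤ 1 - p := by linarith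
  refine ⟨part1 p hp0 hp1 hk hkn, ?_⟩
  rcases Finset.eq_empty_or_nonempty 𝒜 with h0 | hne
  · subst h0
    simp only [Finset.card_empty, Nat.cast_zero, zero_div]
    apply Finset.sum_nonneg
    intro B _
    positivity
  set U := Finset.univ.filter (fun B : Finset (Fin n) => ∃ A ∈ 𝒜, A ⊆ B) with hU
  set μ := (𝒜.card : ℝ) / (n.choose k) with hμ
  have hckpos : (0:ℝ) < (n.choose k : ℝ) := by exact_mod_cast Nat.choose_pos hkn
  have hmu0 : (0:ℝ) ≤ μ := by positivity
  have hmaps : ∀ B ∈ U, B.card ∈ Finset.Icc k n := by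
    intro B hB
    rw [hU, Finset.mem_filter] at hB
    obtain ⟨-, A, hA, hAB⟩ := hB
    rw [Finset.mem_Icc]
    refine ⟨?_, ?_⟩
    · rw [← h𝒜 A hA]
      exact Finset.card_le_card hAB
    · simpa using Finset.card_le_univ B
  have hfib : ∑ B ∈ U, p ^ B.card * (1-p) ^ (n - B.card)
      = ∑ j ∈ Finset.Icc k n, ∑ B ∈ U.filter (fun B => B.card = j),
          p ^ B.card * (1-p) ^ (n - B.card) :=
    (Finset.sum_fiberwise_of_maps_to hmaps _).symm
  have hinner : ∀ j ∈ Finset.Icc k n,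
      ∑ B ∈ U.filter (fun B => B.card = j), p ^ B.card * (1-p) ^ (n-B.card)
        = ((U.filter (fun B => B.card = j)).card : ℝ) * (p^j * (1-p)^(n-j)) := by
    intro j hj
    rw [Finset.sum_congr rfl (fun B hB => ?_), Finset.sum_const, nsmul_eq_mul]
    rw [Finset.mem_filter] at hB
    rw [hB.2]
  have hfilter : ∀ j : ℕ, U.filter (fun B => B.card = j)
      = Finset.univ.filter (fun B : Finset (Fin n) => (∃ A ∈ 𝒜, A ⊆ B) ∧ B.card = j) := by
    intro j
    rw [hU, Finset.filter_filter]
  calc μ / 4 = μ * (1/4) := by ring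
    _ ≤ μ * ∑ j ∈ Finset.Icc k n, (n.choose j:ℝ) * p^j * (1-p)^(n-j) :=
        mul_le_mul_of_nonneg_left (part1 p hp0 hp1 hk hkn) hmu0
    _ = ∑ j ∈ Finset.Icc k n, (μ * (n.choose j:ℝ)) * (p^j * (1-p)^(n-j)) := by
        rw [Finset.mul_sum]
        exact Finset.sum_congr rfl (fun j _ => by ring)
    _ ≤ ∑ j ∈ Finset.Icc k n, ((U.filter (fun B => B.card = j)).card : ℝ) * (p^j*(1-p)^(n-j)) := by
        apply Finset.sum_le_sum
        intro j hj
        rw [Finset.mem_Icc] at hj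
        have hl := lym_up 𝒜 h𝒜 j hj.1 hj.2
        rw [← hfilter j] at hl
        have hcj : (0:ℝ) < (n.choose j : ℝ) := by exact_mod_cast Nat.choose_pos hj.2
        have hml : μ * (n.choose j:ℝ) ≤ ((U.filter (fun B => B.card = j)).card : ℝ) := by
          rw [← hμ] at hl
          calc μ * (n.choose j:ℝ)
              ≤ (((U.filter (fun B => B.card = j)).card : ℝ) / (n.choose j)) * (n.choose j) :=
                mul_le_mul_of_nonneg_right hl (le_of_lt hcj)
            _ = _ := by field_simp
        exact mul_le_mul_of_nonneg_right hml (by positivity)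
    _ = ∑ j ∈ Finset.Icc k n, ∑ B ∈ U.filter (fun B => B.card = j),
          p ^ B.card * (1-p) ^ (n - B.card) := (Finset.sum_congr rfl hinner).symm
    _ = ∑ B ∈ U, p ^ B.card * (1-p) ^ (n - B.card) := hfib.symm
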